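/- Let C_0 ⊆ F_2^n (n > 2) be a binary code with minimum weight at least 4, and C = Span{d(E_n), e(C_0)} ⊆ F_2^{2n}. Then every automorphism of C (coordinate permutation preserving C) preserves the subcode d(E_n), provided the minimum weight of C_0 is strictly greater than 4. -/

import Mathlib

/-- Hamming weight of a binary word. -/
def wt {n : ℕ} (v : Fin n → ZMod 2) : ℕ :=
  (Finset.univ.filter (fun i => v i ≠ 0)).card

/-- Size of the intersection of the supports of two binary words. -/
def interCard {n : ℕ} (v w : Fin n → ZMod 2) : ℕ :=
  (Finset.univ.filter (fun i => v i ≠ 0 ∧ w i ≠ 0)).card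

/-- The doubling map `d : F₂ⁿ → F₂^{2n}`, `(c₁,…,cₙ) ↦ (c₁,c₁,c₂,c₂,…,cₙ,cₙ)`. -/
def dbl {n : ℕ} (c : Fin n → ZMod 2) : Fin (2 * n) → ZMod 2 :=
  fun i => c ⟨(i : ℕ) / 2, by have := i.isLt; omega⟩

/-- The map `e : F₂ⁿ → F₂^{2n}`, `(c₁,…,cₙ) ↦ (0,c₁,0,c₂,…,0,cₙ)`. -/
def emap {n : ℕ} (c : Fin n → ZMod 2) : Fin (2 * n) → ZMod 2 :=
  fun i => if (i : ℕ) % 2 = 1 then c ⟨(i : ℕ) / 2, by have := i.isLt; omega⟩ else 0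

/-- The even-weight code `𝓔ₙ ⊆ F₂ⁿ`. -/
def evenCode (n : ℕ) : Set (Fin n → ZMod 2) := {c | Even (wt c)}

lemma zmod2_ne_zero : ∀ {x : ZMod 2}, x ≠ 0 → x = 1 := by decide

lemma wt_cast {n : ℕ} (c : Fin n → ZMod 2) : ((wt c : ZMod 2)) = ∑ i, c i := by
  classical
  have h1 : ∑ i, c i = ∑ i ∈ Finset.univ.filter (fun i => c i ≠ 0), c i := by
    rw [Finset.sum_filter_ne_zero]
  rw [h1, wt, Finset.sum_congr rfl (fun i hi => zmod2_ne_zero (Finset.mem_filter.mp hi).2)]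
  simp

lemma even_wt_iff {n : ℕ} (c : Fin n → ZMod 2) : Even (wt c) ↔ ∑ i, c i = 0 := by
  rw [even_iff_two_dvd, ← ZMod.natCast_eq_zero_iff, wt_cast]

/-- even code as a submodule -/
def EvenSub (n : ℕ) : Submodule (ZMod 2) (Fin n → ZMod 2) where
  carrier := evenCode n
  add_mem' := by
    intro a b ha hb
    simp only [evenCode, Set.mem_setOf_eq, even_wt_iff] at *
    simp [Finset.sum_add_distrib, ha, hb]
  zero_mem' := by simp [evenCode, even_wt_iff]
  smul_mem' := by
    intro c a ha
    simp only [evenCode, Set.mem_setOf_eq, even_wt_iff] at *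
    simp [← Finset.mul_sum, ha]

/-- dbl as linear map -/
def dblL (n : ℕ) : (Fin n → ZMod 2) →ₗ[ZMod 2] (Fin (2 * n) → ZMod 2) where
  toFun := dbl
  map_add' := fun a b => rfl
  map_smul' := fun c a => rfl

def emapL (n : ℕ) : (Fin n → ZMod 2) →ₗ[ZMod 2] (Fin (2 * n) → ZMod 2) where
  toFun := emap
  map_add' := by
    intro a b; funext i; simp only [emap, Pi.add_apply]
    split <;> simp
  map_smul' := by
    intro c a; funext i; simp only [emap, Pi.smul_apply, RingHom.id_apply]
    split <;> simp

section evals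
variable {n : ℕ}

lemma dbl_apply (c : Fin n → ZMod 2) (i : Fin (2 * n)) :
    dbl c i = c ⟨(i : ℕ) / 2, by have := i.isLt; omega⟩ := rfl

lemma dbl_even (c : Fin n → ZMod 2) (j : Fin n) (h : 2 * (j : ℕ) < 2 * n) :
    dbl c ⟨2 * (j : ℕ), h⟩ = c j := by
  rw [dbl_apply]; congr 1; exact Fin.ext (by simp)

lemma dbl_odd (c : Fin n → ZMod 2) (j : Fin n) (h : 2 * (j : ℕ) + 1 < 2 * n) :
    dbl c ⟨2 * (j : ℕ) + 1, h⟩ = c j := by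
  rw [dbl_apply]; congr 1; exact Fin.ext (by simp [Nat.mul_add_div])

lemma emap_even (c : Fin n → ZMod 2) (j : Fin n) (h : 2 * (j : ℕ) < 2 * n) :
    emap c ⟨2 * (j : ℕ), h⟩ = 0 := by
  simp [emap, Nat.mul_mod_right]

lemma emap_odd (c : Fin n → ZMod 2) (j : Fin n) (h : 2 * (j : ℕ) + 1 < 2 * n) :
    emap c ⟨2 * (j : ℕ) + 1, h⟩ = c j := by
  simp only [emap]
  rw [if_pos (by omega)]
  congr 1; exact Fin.ext (by simp [Nat.mul_add_div])

/-- weight is invariant under coordinate permutation -/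
lemma wt_comp (v : Fin (2*n) → ZMod 2) (σ : Equiv.Perm (Fin (2*n))) :
    wt (v ∘ σ) = wt v := by
  classical
  unfold wt
  exact Finset.card_bij' (fun i _ => σ i) (fun j _ => σ.symm j)
    (by intro a ha
        simp only [Finset.mem_filter, Finset.mem_univ, true_and, Function.comp_apply] at ha ⊢
        exact ha)
    (by intro a ha
        simp only [Finset.mem_filter, Finset.mem_univ, true_and, Function.comp_apply] at ha ⊢
        simpa using ha)
    (by intro a _; simp) (by intro a _; simp)

/-- wt (dbl a) ≤ 2 * wt a -/
lemma wt_dbl_le (a : Fin n → ZMod 2) : wt (dbl a) ≤ 2 * wt a := by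
  classical
  unfold wt
  set T : Fin n → Finset (Fin (2*n)) := fun j =>
    {⟨2 * (j : ℕ), by have := j.isLt; omega⟩, ⟨2 * (j : ℕ) + 1, by have := j.isLt; omega⟩} with hT
  have hsub : (Finset.univ.filter (fun i => dbl a i ≠ 0)) ⊆
      (Finset.univ.filter (fun i => a i ≠ 0)).biUnion T := by
    intro i hi
    simp only [Finset.mem_filter, Finset.mem_univ, true_and] at hi
    rw [Finset.mem_biUnion]
    refine ⟨⟨(i : ℕ) / 2, by have := i.isLt; omega⟩, by simp only [Finset.mem_filter, Finset.mem_univ, true_and]; exact hi, ?_⟩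
    simp only [hT, Finset.mem_insert, Finset.mem_singleton]
    have := i.isLt
    rcases Nat.even_or_odd (i : ℕ) with he | ho
    · obtain ⟨k, hk⟩ := he; left; exact Fin.ext (by simp; omega)
    · obtain ⟨k, hk⟩ := ho; right; exact Fin.ext (by simp; omega)
  calc (Finset.univ.filter (fun i => dbl a i ≠ 0)).card
      ≤ ((Finset.univ.filter (fun i => a i ≠ 0)).biUnion T).card := Finset.card_le_card hsub
    _ ≤ ∑ j ∈ Finset.univ.filter (fun i => a i ≠ 0), (T j).card := Finset.card_biUnion_le
    _ ≤ ∑ j ∈ Finset.univ.filter (fun i => a i ≠ 0), 2 := by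
        apply Finset.sum_le_sum; intro j _
        exact le_trans (Finset.card_insert_le _ _) (by simp)
    _ = 2 * (Finset.univ.filter (fun i => a i ≠ 0)).card := by
        rw [Finset.sum_const, smul_eq_mul, mul_comm]
end evals

/-- if b ≠ 0, each support coordinate of b contributes to dbl a + emap b -/
lemma wt_le_wt_add {n : ℕ} (a b : Fin n → ZMod 2) :
    wt b ≤ wt (dbl a + emap b) := by
  classical
  unfold wt
  set v : Fin (2*n) → ZMod 2 := dbl a + emap b with hv
  refine Finset.card_le_card_of_injOn
    (fun j => if v ⟨2 * (j : ℕ) + 1, by have := j.isLt; omega⟩ ≠ 0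
      then ⟨2 * (j : ℕ) + 1, by have := j.isLt; omega⟩
      else ⟨2 * (j : ℕ), by have := j.isLt; omega⟩) ?_ ?_
  · intro j hj
    simp only [Finset.mem_coe, Finset.mem_filter, Finset.mem_univ, true_and] at hj ⊢
    split
    · assumption
    · rename_i h
      push_neg at h
      have hodd : v ⟨2 * (j : ℕ) + 1, by have := j.isLt; omega⟩
          = a j + b j := by
        simp [hv, Pi.add_apply, dbl_odd, emap_odd]
      have heven : v ⟨2 * (j : ℕ), by have := j.isLt; omega⟩ = a j := by
        simp [hv, Pi.add_apply, dbl_even, emap_even]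
      rw [heven]
      rw [hodd] at h
      intro haj
      rw [haj, zero_add] at h
      exact hj h
  · intro j₁ _ j₂ _ heq
    have h1 : ∀ j : Fin n, (Fin.val (if v ⟨2 * (j : ℕ) + 1, by have := j.isLt; omega⟩ ≠ 0
      then (⟨2 * (j : ℕ) + 1, by have := j.isLt; omega⟩ : Fin (2*n))
      else ⟨2 * (j : ℕ), by have := j.isLt; omega⟩)) / 2 = (j : ℕ) := by
      intro j; split <;> simp [Nat.mul_add_div]
    have := congrArg (fun x : Fin (2*n) => (x : ℕ) / 2) heq
    simp only [h1] at this
    exact Fin.ext this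

/-- every even-weight word is in the span of weight-2 words -/
lemma even_mem_span_wt2 {n : ℕ} :
    ∀ m (a : Fin n → ZMod 2), wt a = m → Even m →
      a ∈ Submodule.span (ZMod 2) {g : Fin n → ZMod 2 | wt g = 2} := by
  classical
  intro m
  induction m using Nat.strong_induction_on with
  | _ m ih =>
    intro a ha hev
    rcases Nat.eq_zero_or_pos m with hm | hm
    · subst hm
      have ha0 : (Finset.univ.filter (fun i => a i ≠ 0)).card = 0 := ha
      have : a = 0 := by
        funext i
        simp only [Pi.zero_apply]
        by_contra hi
        have : i ∈ Finset.univ.filter (fun i => a i ≠ 0) := by simp [hi]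
        rw [Finset.card_eq_zero.mp ha0] at this
        simp at this
      rw [this]; exact Submodule.zero_mem _
    · have hm2 : 2 ≤ m := by
        rcases hev with ⟨k, hk⟩; omega
      have ha' : (Finset.univ.filter (fun i => a i ≠ 0)).card = m := ha
      have hcard : 1 < (Finset.univ.filter (fun i => a i ≠ 0)).card := by
        rw [ha']; omega
      obtain ⟨i, hi, j, hj, hij⟩ := Finset.one_lt_card.mp hcard
      simp only [Finset.mem_filter, Finset.mem_univ, true_and] at hi hj
      set g : Fin n → ZMod 2 := fun k => if k = i ∨ k = j then 1 else 0 with hg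
      have hgsupp : Finset.univ.filter (fun k => g k ≠ 0) = {i, j} := by
        ext k
        simp only [Finset.mem_filter, Finset.mem_univ, true_and, Finset.mem_insert,
          Finset.mem_singleton, hg]
        by_cases h : k = i ∨ k = j <;> simp [h]
      have hwg : wt g = 2 := by
        rw [wt, hgsupp, Finset.card_insert_of_notMem (by simp [hij]), Finset.card_singleton]
      have hsupp' : Finset.univ.filter (fun k => (a + g) k ≠ 0)
          = (Finset.univ.filter (fun k => a k ≠ 0)) \ {i, j} := by
        ext k
        simp only [Finset.mem_filter, Finset.mem_univ, true_and, Finset.mem_sdiff,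
          Finset.mem_insert, Finset.mem_singleton, Pi.add_apply]
        by_cases hki : k = i
        · subst hki
          rw [zmod2_ne_zero hi]
          simp [hg, show (1:ZMod 2) + 1 = 0 from by decide, hi]
        · by_cases hkj : k = j
          · subst hkj
            rw [zmod2_ne_zero hj]
            simp [hg, hki, show (1:ZMod 2) + 1 = 0 from by decide, hj]
          · simp [hg, hki, hkj]
      have hwt' : wt (a + g) = m - 2 := by
        rw [wt, hsupp', Finset.card_sdiff_of_subset]
        · rw [ha', Finset.card_insert_of_notMem (by simp [hij]), Finset.card_singleton]
        · intro k hk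
          simp only [Finset.mem_insert, Finset.mem_singleton] at hk
          rcases hk with rfl | rfl <;> simp [hi, hj]
      have hrec := ih (m - 2) (by omega) (a + g) hwt'
        (by rcases hev with ⟨k, hk⟩; exact ⟨k - 1, by omega⟩)
      have : a = (a + g) + g := by
        funext k
        simp only [Pi.add_apply]
        have : g k + g k = 0 := by
          rcases (by decide : ∀ x : ZMod 2, x + x = 0) (g k) with h
          exact h
        rw [add_assoc, this, add_zero]
      rw [this]
      exact Submodule.add_mem _ hrec (Submodule.subset_span hwg)

/-- for `n > 2` and a binary code `C₀ ⊆ F₂ⁿ` of minimum weight strictly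
greater than 4, every automorphism of `C = Span{d(𝓔ₙ), e(C₀)}` preserves the subcode
`d(𝓔ₙ)`. -/
theorem aut_preserves_dblEven (n : ℕ) (hn : 2 < n)
    (C₀ : Submodule (ZMod 2) (Fin n → ZMod 2))
    (hmin : ∀ y ∈ C₀, y ≠ 0 → 4 < wt y) :
    ∀ σ : Equiv.Perm (Fin (2 * n)),
      (∀ v : Fin (2 * n) → ZMod 2,
        v ∈ Submodule.span (ZMod 2) (dbl '' evenCode n ∪ emap '' C₀) ↔
        v ∘ σ ∈ Submodule.span (ZMod 2) (dbl '' evenCode n ∪ emap '' C₀)) →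
      ∀ v ∈ dbl '' evenCode n, v ∘ σ ∈ dbl '' evenCode n := by
  intro σ hσ v hv
  classical
  set C := Submodule.span (ZMod 2) (dbl '' evenCode n ∪ emap '' (C₀ : Set _)) with hCdef
  have hC : C = Submodule.map (dblL n) (EvenSub n) ⊔ Submodule.map (emapL n) C₀ := by
    rw [hCdef,
        show dbl '' evenCode n = (dblL n) '' ((EvenSub n : Submodule (ZMod 2) _) : Set _) from rfl,
        show emap '' (C₀ : Set _) = (emapL n) '' (C₀ : Set _) from rfl,
        Submodule.span_union, Submodule.span_image, Submodule.span_image,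
        Submodule.span_eq, Submodule.span_eq]
  have key : ∀ w ∈ C, wt w ≤ 4 → w ∈ dbl '' evenCode n := by
    intro w hw hwt
    rw [hC, Submodule.mem_sup] at hw
    obtain ⟨y, hy, z, hz, hyz⟩ := hw
    obtain ⟨a, ha, rfl⟩ := Submodule.mem_map.mp hy
    obtain ⟨b, hb, rfl⟩ := Submodule.mem_map.mp hz
    by_cases hb0 : b = 0
    · subst hb0
      refine ⟨a, ha, ?_⟩
      rw [← hyz, map_zero, add_zero]
      rfl
    · exfalso
      have h1 : 4 < wt b := hmin b hb hb0
      have h2 : wt b ≤ wt (dblL n a + emapL n b) := wt_le_wt_add a b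
      rw [hyz] at h2
      omega
  have gen : ∀ g : Fin n → ZMod 2, wt g = 2 → dbl g ∘ σ ∈ dbl '' evenCode n := by
    intro g hg
    have hgC : dbl g ∈ C := by
      rw [hC]
      exact Submodule.mem_sup_left
        (Submodule.mem_map_of_mem (show Even (wt g) from hg ▸ ⟨1, rfl⟩))
    have hmem := (hσ (dbl g)).mp hgC
    apply key _ hmem
    rw [wt_comp]
    calc wt (dbl g) ≤ 2 * wt g := wt_dbl_le g
      _ = 4 := by rw [hg]
  obtain ⟨a, ha, rfl⟩ := hv
  have haspan := even_mem_span_wt2 (wt a) a rfl ha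
  set D := Submodule.map (dblL n) (EvenSub n) with hD
  have hDset : dbl '' evenCode n = (D : Set _) := by
    ext w
    constructor
    · rintro ⟨c, hc, rfl⟩
      exact Submodule.mem_map_of_mem hc
    · intro hw
      obtain ⟨c, hc, rfl⟩ := Submodule.mem_map.mp hw
      exact ⟨c, hc, rfl⟩
  set permL : (Fin (2*n) → ZMod 2) →ₗ[ZMod 2] (Fin (2*n) → ZMod 2) :=
    { toFun := fun w => w ∘ σ
      map_add' := fun _ _ => rfl
      map_smul' := fun _ _ => rfl } with hpermL
  have hle : Submodule.span (ZMod 2) {g : Fin n → ZMod 2 | wt g = 2} ≤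
      Submodule.comap (permL.comp (dblL n)) D := by
    rw [Submodule.span_le]
    intro g hg
    simp only [Set.mem_setOf_eq] at hg
    have hmem := gen g hg
    rw [hDset] at hmem
    exact hmem
  have hfin := hle haspan
  rw [Submodule.mem_comap] at hfin
  rw [hDset]
  exact hfin
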